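/- For g_B(z) = z + B + 1/z with |B| > 3: the orbits of both critical points ±1 under iteration of g_B tend to infinity; i.e., |g_B^n(1)| → ∞ and |g_B^n(-1)| → ∞ as n → ∞. -/

import Mathlib

open Filter

private lemma escape_aux (B : ℂ) (hB : 3 < ‖B‖) (z0 : ℂ)
    (h0 : ‖z0‖ = 1) :
    ∀ n : ℕ, 1 ≤ ‖(fun w : ℂ => w + B + 1 / w)^[n] z0‖ ∧
      6 * (n : ℝ) - ‖B‖ ≤
        (((fun w : ℂ => w + B + 1 / w)^[n] z0) * (starRingEnd ℂ) B).re := by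
  intro n
  induction n with
  | zero =>
      refine ⟨by simp [h0], ?_⟩
      simp only [Function.iterate_zero, id, Nat.cast_zero]
      have h1 : |(z0 * (starRingEnd ℂ) B).re| ≤ ‖z0 * (starRingEnd ℂ) B‖ :=
        Complex.abs_re_le_norm _
      have h2 : ‖z0 * (starRingEnd ℂ) B‖ = ‖B‖ := by
        rw [norm_mul, Complex.norm_conj, h0, one_mul]
      rw [h2] at h1
      have := (abs_le.mp h1).1
      linarith
  | succ n ih =>
      obtain ⟨hz1, hzr⟩ := ih
      set z := (fun w : ℂ => w + B + 1 / w)^[n] z0 with hz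
      set A := ‖B‖ with hA
      have hA0 : (0 : ℝ) < A := by linarith
      have hzpos : (0 : ℝ) < ‖z‖ := by linarith
      have hzne : z ≠ 0 := by
        intro h; rw [h] at hzpos; simp at hzpos
      rw [Function.iterate_succ_apply', ← hz]
      -- bound on |1/z|
      have hinv_abs : ‖1 / z‖ ≤ 1 := by
        rw [norm_div, norm_one, div_le_one hzpos]; exact hz1
      -- bound on Re((1/z) * conj B)
      have hrinv : -A ≤ ((1 / z) * (starRingEnd ℂ) B).re := by
        have h1 : |((1 / z) * (starRingEnd ℂ) B).re| ≤
            ‖(1 / z) * (starRingEnd ℂ) B‖ := Complex.abs_re_le_norm _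
        have h2 : ‖(1 / z) * (starRingEnd ℂ) B‖ ≤ A := by
          rw [norm_mul, Complex.norm_conj, ← hA]
          nlinarith
        have := (abs_le.mp (h1.trans h2)).1
        linarith
      have hBB : ((B : ℂ) * (starRingEnd ℂ) B).re = A ^ 2 := by
        rw [Complex.mul_conj]
        rw [Complex.normSq_eq_norm_sq]
        norm_cast
      have hre_split : ((z + B + 1 / z) * (starRingEnd ℂ) B).re =
          (z * (starRingEnd ℂ) B).re + (B * (starRingEnd ℂ) B).re +
            ((1 / z) * (starRingEnd ℂ) B).re := by
        simp [add_mul, Complex.add_re]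
      -- part 2 : the Re bound
      have hre_bound : 6 * ((n : ℝ) + 1) - A ≤
          ((z + B + 1 / z) * (starRingEnd ℂ) B).re := by
        rw [hre_split, hBB]
        nlinarith
      -- |z + B| ≥ A - 1
      have hsq : ‖z + B‖ ^ 2 =
          ‖z‖ ^ 2 + A ^ 2 + 2 * (z * (starRingEnd ℂ) B).re := by
        rw [Complex.sq_norm (z + B), Complex.normSq_add]
        simp [Complex.normSq_eq_norm_sq, hA]
      have hrz_low : -A ≤ (z * (starRingEnd ℂ) B).re := by
        have : (0 : ℝ) ≤ 6 * (n : ℝ) := by positivity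
        linarith
      have habB : A - 1 ≤ ‖z + B‖ := by
        nlinarith [norm_nonneg (z + B), hsq]
      -- triangle inequality
      have htri : ‖z + B‖ - ‖1 / z‖ ≤
          ‖z + B + 1 / z‖ := by
        have h := norm_sub_norm_le (z + B) (-(1 / z))
        simp only [sub_neg_eq_add, norm_neg] at h
        exact h
      have habs : 1 ≤ ‖z + B + 1 / z‖ := by linarith
      refine ⟨habs, ?_⟩
      push_cast
      linarith [hre_bound]

open Filter in
theorem stmt_11 (B : ℂ) (hB : 3 < ‖B‖) :
    Tendsto (fun n : ℕ => ‖(fun w : ℂ => w + B + 1 / w)^[n] 1‖)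
        atTop atTop ∧
      Tendsto (fun n : ℕ => ‖(fun w : ℂ => w + B + 1 / w)^[n] (-1)‖)
        atTop atTop := by
  have hA0 : (0 : ℝ) < ‖B‖ := by linarith
  have base : Tendsto (fun n : ℕ => (6 * (n : ℝ) - ‖B‖) / ‖B‖)
      atTop atTop := by
    apply Tendsto.atTop_div_const hA0
    apply tendsto_atTop_add_const_right
    exact (tendsto_natCast_atTop_atTop (R := ℝ)).const_mul_atTop (by norm_num)
  have key : ∀ z0 : ℂ, ‖z0‖ = 1 →
      Tendsto (fun n : ℕ => ‖(fun w : ℂ => w + B + 1 / w)^[n] z0‖)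
        atTop atTop := by
    intro z0 h0
    refine tendsto_atTop_mono (fun n => ?_) base
    obtain ⟨h1, h2⟩ := escape_aux B hB z0 h0 n
    have h3 : (((fun w : ℂ => w + B + 1 / w)^[n] z0) * (starRingEnd ℂ) B).re ≤
        ‖(fun w : ℂ => w + B + 1 / w)^[n] z0‖ * ‖B‖ := by
      have := Complex.re_le_norm (((fun w : ℂ => w + B + 1 / w)^[n] z0) * (starRingEnd ℂ) B)
      rwa [norm_mul, Complex.norm_conj] at this
    rw [div_le_iff₀ hA0]
    linarith
  exact ⟨key 1 (by simp), key (-1) (by simp)⟩
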